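/- Let R > 0, m_1, m_2, m_3 > 0, let α ∈ (0, R) be real, and let c ∈ ℂ with |c| < R, c ≠ 0 and c ≠ α. If the triple of points (c_1, c_2, c_3) = (0, α, c) satisfies the elliptic relative-equilibrium equations with n = 3, then c = −α and m_2 = m_3. -/

import Mathlib

open Complex ComplexConjugate Finset

/-- The quantity `Θ_{2,(k,j)}` appearing in the denominators of the equations of
motion of the curved `n`-body problem in the Poincaré disk of radius `R`. -/
noncomputable def diskTheta (R : ℝ) (z w : ℂ) : ℝ :=
  ((2 * (z * conj w + w * conj z) * (R : ℂ) ^ 2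
      - ((((‖z‖) ^ 2 + R ^ 2) * ((‖w‖) ^ 2 + R ^ 2) : ℝ) : ℂ)) ^ 2
    - (((R ^ 2 - (‖z‖) ^ 2) ^ 2 * (R ^ 2 - (‖w‖) ^ 2) ^ 2 : ℝ) : ℂ)).re

/-- The points `c k` satisfy the elliptic relative-equilibrium equations in the
Poincaré disk of radius `R` with masses `m`. -/
def EllipticRelEq (R : ℝ) {n : ℕ} (m : Fin n → ℝ) (c : Fin n → ℂ) : Prop :=
  ∀ k : Fin n,
    (R : ℂ) ^ 3 * (((R ^ 2 + (‖c k‖) ^ 2 : ℝ)) : ℂ) * c k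
        / (((4 * (R ^ 2 - (‖c k‖) ^ 2) ^ 4 : ℝ)) : ℂ)
      = -∑ j ∈ Finset.univ.erase k,
          (m j : ℂ) * ((((‖c j‖) ^ 2 - R ^ 2) ^ 2 : ℝ) : ℂ)
            * (c j - c k) * ((R : ℂ) ^ 2 - c k * conj (c j))
            / (((diskTheta R (c k) (c j)) ^ ((3 : ℝ) / 2) : ℝ) : ℂ)

lemma rpow32 (y : ℝ) (hy : 0 ≤ y) : ((y^2 : ℝ) ^ ((3:ℝ)/2)) = y^3 := by
  rw [← Real.rpow_natCast y 2, ← Real.rpow_mul hy,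
    show ((2:ℕ):ℝ)*(3/2) = ((3:ℕ):ℝ) by norm_num, Real.rpow_natCast]

lemma diskTheta_zero_left (R : ℝ) (w : ℂ) :
    diskTheta R 0 w = (2 * R^3 * ‖w‖)^2 := by
  simp [diskTheta]; norm_cast; ring

lemma diskTheta_real (R a t : ℝ) :
    diskTheta R (a : ℂ) (t : ℂ) = (2*R*(a-t)*(a*t-R^2))^2 := by
  simp [diskTheta, ← Complex.ofReal_pow]; norm_cast; ring


set_option maxHeartbeats 1000000 in
lemma extractP2 (R α x m₁ m₃ : ℝ) (hR : 0 < R) (hα0 : 0 < α) (hx0 : 0 < x)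
    (hneα : (R^2-α^2 : ℝ) ≠ 0)
    (h : (R^3*(R^2+α^2)*α/(4*(R^2-α^2)^4) : ℝ)
      = -(m₃*(x^2-R^2)^2*(-x-α)*(R^2-α*(-x))/((2*R*(α+x)*(α*x+R^2))^3))
        + -(-(m₁*(R^2)^2*α*R^2)/((2*R^3*α)^3))) :
    2*R^6*(R^2+α^2)*α^3*(α+x)^2*(α*x+R^2)^2
      = m₁*(R^2-α^2)^4*(α+x)^2*(α*x+R^2)^2 + m₃*α^2*(R^2-x^2)^2*(R^2-α^2)^4 := by
  have hd1 : (4*(R^2-α^2)^4 : ℝ) ≠ 0 := mul_ne_zero (by norm_num) (pow_ne_zero _ hneα)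
  have hd2 : ((2*R*(α+x)*(α*x+R^2))^3 : ℝ) ≠ 0 := by positivity
  have hd3 : ((2*R^3*α)^3 : ℝ) ≠ 0 := by positivity
  field_simp at h
  apply mul_left_cancel₀ (show (32*R^9*α*(α+x)*(α*x+R^2) : ℝ) ≠ 0 by positivity)
  linear_combination 8*R^9*α*h

set_option maxHeartbeats 1000000 in
lemma extractP3 (R α x m₁ m₂ : ℝ) (hR : 0 < R) (hα0 : 0 < α) (hx0 : 0 < x)
    (hnex : (R^2-x^2 : ℝ) ≠ 0)
    (h : (R^3*(R^2+x^2)*(-x)/(4*(R^2-x^2)^4) : ℝ)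
      = -(m₂*(α^2-R^2)^2*(α-(-x))*(R^2-(-x)*α)/((2*R*(α+x)*(α*x+R^2))^3))
        + -(-(m₁*(R^2)^2*(-x)*R^2)/((2*R^3*x)^3))) :
    2*R^6*(R^2+x^2)*x^3*(α+x)^2*(α*x+R^2)^2
      = m₁*(R^2-x^2)^4*(α+x)^2*(α*x+R^2)^2 + m₂*x^2*(R^2-α^2)^2*(R^2-x^2)^4 := by
  have hd4 : (4*(R^2-x^2)^4 : ℝ) ≠ 0 := mul_ne_zero (by norm_num) (pow_ne_zero _ hnex)
  have hd2 : ((2*R*(α+x)*(α*x+R^2))^3 : ℝ) ≠ 0 := by positivity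
  have hd5 : ((2*R^3*x)^3 : ℝ) ≠ 0 := by positivity
  field_simp at h
  apply mul_left_cancel₀ (show (32*R^9*x*(α+x)*(α*x+R^2) : ℝ) ≠ 0 by positivity)
  linear_combination -8*R^9*x*h

set_option maxHeartbeats 4000000 in
lemma euler_key (R α x m₁ m₂ m₃ : ℝ) (hR : 0 < R) (hα0 : 0 < α) (hαR : α < R)
    (hx0 : 0 < x) (hxR : x < R)
    (P1 : m₂*(R^2-α^2)^2*x^2 = m₃*(R^2-x^2)^2*α^2)
    (P2 : 2*R^6*(R^2+α^2)*α^3*(α+x)^2*(α*x+R^2)^2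
      = m₁*(R^2-α^2)^4*(α+x)^2*(α*x+R^2)^2 + m₃*α^2*(R^2-x^2)^2*(R^2-α^2)^4)
    (P3 : 2*R^6*(R^2+x^2)*x^3*(α+x)^2*(α*x+R^2)^2
      = m₁*(R^2-x^2)^4*(α+x)^2*(α*x+R^2)^2 + m₂*x^2*(R^2-α^2)^2*(R^2-x^2)^4) :
    x = α := by
  have key : α^3*(R^2+α^2)*(R^2-x^2)^4 = x^3*(R^2+x^2)*(R^2-α^2)^4 := by
    apply mul_left_cancel₀ (show (2*R^6*(α+x)^2*(α*x+R^2)^2 : ℝ) ≠ 0 by positivity)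
    linear_combination (R^2-x^2)^4 * P2 - (R^2-α^2)^4 * P3
      - (R^2-α^2)^4*(R^2-x^2)^4 * P1
  rcases lt_trichotomy α x with hlt | heq | hgt
  · exfalso
    have A : α^3*(R^2+α^2) < x^3*(R^2+x^2) :=
      mul_lt_mul'' (pow_lt_pow_left₀ hlt hα0.le (by norm_num))
        (by nlinarith) (by positivity) (by nlinarith)
    have B : (R^2-x^2)^4 < (R^2-α^2)^4 := by
      apply pow_lt_pow_left₀ (by nlinarith) (by nlinarith)
      norm_num
    have C : 0 < α^3*(R^2+α^2) := mul_pos (pow_pos hα0 3) (by nlinarith)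
    have D : 0 < (R^2-x^2)^4 := pow_pos (by nlinarith) 4
    nlinarith [mul_lt_mul'' A B C.le D.le]
  · exact heq.symm
  · exfalso
    have A : x^3*(R^2+x^2) < α^3*(R^2+α^2) :=
      mul_lt_mul'' (pow_lt_pow_left₀ hgt hx0.le (by norm_num))
        (by nlinarith) (by positivity) (by nlinarith)
    have B : (R^2-α^2)^4 < (R^2-x^2)^4 := by
      apply pow_lt_pow_left₀ (by nlinarith) (by nlinarith)
      norm_num
    have C : 0 < x^3*(R^2+x^2) := mul_pos (pow_pos hx0 3) (by nlinarith)
    have D : 0 < (R^2-α^2)^4 := pow_pos (by nlinarith) 4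
    nlinarith [mul_lt_mul'' A B C.le D.le]

set_option maxHeartbeats 1000000

/-- Eulerian elliptic relative equilibria of the curved 3-body problem in the Poincaré
disk with one body fixed at the center: if `(0, α, c)` satisfies the elliptic
relative-equilibrium equations, then `c = −α` and `m₂ = m₃`. -/
theorem ellipticRelEq_euler_three_bodies (R m₁ m₂ m₃ α : ℝ) (hR : 0 < R)
    (hm₁ : 0 < m₁) (hm₂ : 0 < m₂) (hm₃ : 0 < m₃)
    (hα : α ∈ Set.Ioo 0 R) (c : ℂ) (hc : ‖c‖ < R)
    (hc0 : c ≠ 0) (hcα : c ≠ (α : ℂ))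
    (h : EllipticRelEq R ![m₁, m₂, m₃] ![0, (α : ℂ), c]) :
    c = -(α : ℂ) ∧ m₂ = m₃ := by
  obtain ⟨hα0, hαR⟩ := hα
  set x := ‖c‖ with hxdef
  have hx0 : 0 < x := norm_pos_iff.mpr hc0
  have hRc : (R:ℂ) ≠ 0 := Complex.ofReal_ne_zero.mpr hR.ne'
  have hαc : ((α:ℝ):ℂ) ≠ 0 := Complex.ofReal_ne_zero.mpr hα0.ne'
  have hxc : ((x:ℝ):ℂ) ≠ 0 := Complex.ofReal_ne_zero.mpr hx0.ne'
  have hxR2 : x^2 - R^2 ≠ 0 := by nlinarith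
  have hxR2c : ((x:ℂ))^2 - (R:ℂ)^2 ≠ 0 := by
    intro H; apply hxR2; exact_mod_cast congrArg Complex.re H
  have hαR2 : 0 < (α^2 - R^2)^2 := by
    have : α^2 - R^2 ≠ 0 := by nlinarith
    positivity
  have hxR2' : 0 < (x^2 - R^2)^2 := by positivity
  -- equation k = 1 : c is a negative real
  have h0 := h 0
  rw [show (Finset.univ.erase (0:Fin 3)) = {1,2} by decide] at h0
  simp [Finset.sum_insert, Finset.mem_singleton] at h0
  rw [diskTheta_zero_left, diskTheta_zero_left] at h0
  simp only [Complex.norm_real, Real.norm_eq_abs, abs_of_pos hα0] at h0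
  rw [rpow32 _ (by positivity), rpow32 _ (by positivity)] at h0
  have d2 : ((2*(R:ℂ)^3*(α:ℂ))^3) ≠ 0 := by
    apply pow_ne_zero; simp [hRc, hαc]
  have d3 : ((2*(R:ℂ)^3*(x:ℂ))^3) ≠ 0 := by
    apply pow_ne_zero; simp [hRc, hxc]
  rw [← hxdef] at h0
  field_simp at h0
  set t : ℝ := (m₂*(α^2-R^2)^2*α*R^2*(2*R^3*x)^3) / (m₃*(x^2-R^2)^2*R^2*(2*R^3*α)^3) with hT
  have ht0 : 0 < t := by
    rw [hT]
    apply div_pos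
    · apply mul_pos (mul_pos (mul_pos (mul_pos hm₂ hαR2) hα0) (by positivity)) (by positivity)
    · apply mul_pos (mul_pos (mul_pos hm₃ hxR2') (by positivity)) (by positivity)
  have hq' : ((m₃:ℂ) * (((x:ℝ):ℂ)^2-((R:ℝ):ℂ)^2)^2 * ((R:ℝ):ℂ)^2 * (2*((R:ℝ):ℂ)^3*((α:ℝ):ℂ))^3) ≠ 0 :=
    mul_ne_zero (mul_ne_zero (mul_ne_zero (Complex.ofReal_ne_zero.mpr hm₃.ne')
      (pow_ne_zero _ hxR2c)) (pow_ne_zero _ hRc)) d2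
  have hc' : c = -(t:ℂ) := by
    rw [hT]
    push_cast
    rw [div_eq_mul_inv, neg_eq_iff_eq_neg.symm, eq_mul_inv_iff_mul_eq₀ hq']
    push_cast at h0
    linear_combination -h0
  have hxt : x = t := by
    rw [hxdef, hc']
    rw [show (-(t:ℂ)) = ((-t:ℝ):ℂ) by push_cast; ring]
    rw [Complex.norm_real, Real.norm_eq_abs, abs_of_neg (by linarith)]
    ring
  have hcx : c = -(x:ℂ) := by rw [hc', hxt]
  clear hc' hT ht0 hq' h0 d2 d3
  clear_value t
  clear_value x
  -- real version of equation k = 1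
  have P1 : m₂*(R^2-α^2)^2*x^2 = m₃*(R^2-x^2)^2*α^2 := by
    have h0 := h 0
    rw [show (Finset.univ.erase (0:Fin 3)) = {1,2} by decide] at h0
    simp [Finset.sum_insert, Finset.mem_singleton] at h0
    rw [diskTheta_zero_left, diskTheta_zero_left] at h0
    simp only [Complex.norm_real, Real.norm_eq_abs, abs_of_pos hα0, ← hxdef] at h0
    rw [rpow32 _ (by positivity), rpow32 _ (by positivity), hcx] at h0
    have h0' : (0:ℝ) = -(m₃ * (x ^ 2 - R ^ 2) ^ 2 * (-x) * R ^ 2 / (2 * R ^ 3 * x) ^ 3) +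
        -(m₂ * (α ^ 2 - R ^ 2) ^ 2 * α * R ^ 2 / (2 * R ^ 3 * α) ^ 3) := by
      exact_mod_cast h0
    have hd2 : (2*R^3*α)^3 ≠ 0 := by positivity
    have hd3 : (2*R^3*x)^3 ≠ 0 := by positivity
    field_simp at h0'
    apply mul_left_cancel₀ (show (8*R^11*α*x:ℝ) ≠ 0 by positivity)
    linear_combination 8*R^11*α*x*h0'
  -- diskTheta values
  have θ1 : diskTheta R (α:ℂ) 0 = (2*R^3*α)^2 := by
    rw [show (0:ℂ) = ((0:ℝ):ℂ) by norm_num, diskTheta_real]; ring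
  have θ2 : diskTheta R (α:ℂ) (-(x:ℂ)) = (2*R*(α+x)*(α*x+R^2))^2 := by
    rw [show (-(x:ℂ)) = ((-x:ℝ):ℂ) by push_cast; ring, diskTheta_real]; ring
  have θ3 : diskTheta R (-(x:ℂ)) 0 = (2*R^3*x)^2 := by
    rw [show (-(x:ℂ)) = ((-x:ℝ):ℂ) by push_cast; ring,
      show (0:ℂ) = ((0:ℝ):ℂ) by norm_num, diskTheta_real]; ring
  have θ4 : diskTheta R (-(x:ℂ)) (α:ℂ) = (2*R*(α+x)*(α*x+R^2))^2 := by
    rw [show (-(x:ℂ)) = ((-x:ℝ):ℂ) by push_cast; ring, diskTheta_real]; ring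
  -- equation k = 2
  have h1 := h 1
  rw [show (Finset.univ.erase (1:Fin 3)) = {0,2} by decide] at h1
  simp [Finset.sum_insert, Finset.mem_singleton] at h1
  rw [← hxdef, hcx] at h1
  rw [θ1, θ2] at h1
  rw [rpow32 _ (by positivity), rpow32 _ (by positivity)] at h1
  simp only [Complex.norm_real, Real.norm_eq_abs, abs_of_pos hα0, map_neg, Complex.conj_ofReal] at h1
  have h1' : (R^3*(R^2+α^2)*α/(4*(R^2-α^2)^4) : ℝ)
      = -(m₃*(x^2-R^2)^2*(-x-α)*(R^2-α*(-x))/((2*R*(α+x)*(α*x+R^2))^3))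
        + -(-(m₁*(R^2)^2*α*R^2)/((2*R^3*α)^3)) := by exact Complex.ofReal_injective (by push_cast at h1 ⊢; linear_combination h1)
  have hneα : (R^2-α^2 : ℝ) ≠ 0 := by nlinarith
  have hnex : (R^2-x^2 : ℝ) ≠ 0 := by nlinarith
  have P2 := extractP2 R α x m₁ m₃ hR hα0 hx0 hneα h1'
  -- equation k = 3
  have h2 := h 2
  rw [show (Finset.univ.erase (2:Fin 3)) = {0,1} by decide] at h2
  simp [Finset.sum_insert, Finset.mem_singleton] at h2
  rw [← hxdef, hcx] at h2
  rw [θ3, θ4] at h2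
  rw [rpow32 _ (by positivity), rpow32 _ (by positivity)] at h2
  simp only [Complex.norm_real, Real.norm_eq_abs, abs_of_pos hα0, map_neg, Complex.conj_ofReal,
    map_zero] at h2
  have h2' : (R^3*(R^2+x^2)*(-x)/(4*(R^2-x^2)^4) : ℝ)
      = -(m₂*(α^2-R^2)^2*(α-(-x))*(R^2-(-x)*α)/((2*R*(α+x)*(α*x+R^2))^3))
        + -(-(m₁*(R^2)^2*(-x)*R^2)/((2*R^3*x)^3)) := by exact Complex.ofReal_injective (by push_cast at h2 ⊢; linear_combination h2)
  have P3 := extractP3 R α x m₁ m₂ hR hα0 hx0 hnex h2'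
  have hxα : x = α := euler_key R α x m₁ m₂ m₃ hR hα0 hαR hx0 hc P1 P2 P3
  constructor
  · rw [hcx, hxα]
  · have hQ : (m₂ - m₃) * ((R^2-α^2)^2*α^2) = 0 := by
      rw [hxα] at P1; linear_combination P1
    rcases mul_eq_zero.mp hQ with hmm | hzero
    · linarith [sub_eq_zero.mp hmm]
    · exfalso
      have : 0 < (R^2-α^2)^2*α^2 := by
        have h' : R^2-α^2 ≠ 0 := by nlinarith
        positivity
      linarith [this.ne' hzero]
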